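/- arXiv:1604.06689 — 2 statements merged into one kernel-verified Lean document; each statement's English description precedes it below -/
import Mathlib

section
/- Let γ ∈ SL(2,ℂ) be hyperbolic (diagonalizable with an eigenvalue λ with |λ| > 1), with repulsive fixed point y₀ and attractive fixed point z₀ on ℂP¹. Then there exists a constant C₁ > 0 such that for all natural numbers n, the n-th iterate γⁿ maps the complement of the open chordal disc D(y₀, C₁|λ|⁻ⁿ) into the closed chordal disc of center z₀ and radius C₁|λ|⁻ⁿ. -/
open Complex Set

/-- Chordal distance on ℂP¹ = ℂ ∪ {∞}, modeled as `Option ℂ` (`none` = ∞). -/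
noncomputable def chordal : Option ℂ → Option ℂ → ℝ
  | some z₁, some z₂ =>
      ‖z₁ - z₂‖ /
        (Real.sqrt (1 + ‖z₁‖ ^ 2) * Real.sqrt (1 + ‖z₂‖ ^ 2))
  | some z, none => 1 / Real.sqrt (1 + ‖z‖ ^ 2)
  | none, some z => 1 / Real.sqrt (1 + ‖z‖ ^ 2)
  | none, none => 0

/-- Möbius action of a 2×2 complex matrix on ℂP¹. -/
noncomputable def mobius (g : Matrix (Fin 2) (Fin 2) ℂ) : Option ℂ → Option ℂ
  | some z => if g 1 0 * z + g 1 1 = 0 then none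
              else some ((g 0 0 * z + g 0 1) / (g 1 0 * z + g 1 1))
  | none => if g 1 0 = 0 then none else some (g 0 0 / g 1 0)

/-- Operator norm of a 2×2 complex matrix acting on ℂ² with Euclidean norm. -/
noncomputable def opNorm (g : Matrix (Fin 2) (Fin 2) ℂ) : ℝ :=
  ‖LinearMap.toContinuousLinearMap (Matrix.toEuclideanLin g)‖

/-- Membership in SU(2). -/
def SU2 (k : Matrix (Fin 2) (Fin 2) ℂ) : Prop := k.det = 1 ∧ k.conjTranspose * k = 1

/-- Open chordal disc. -/
def Dopen (z : Option ℂ) (α : ℝ) : Set (Option ℂ) := {w | chordal w z < α}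

/-- Closed chordal disc. -/
def Dclosed (z : Option ℂ) (α : ℝ) : Set (Option ℂ) := {w | chordal w z ≤ α}
abbrev SL2 := Matrix.SpecialLinearGroup (Fin 2) ℂ


noncomputable def nrm (v : ℂ × ℂ) : ℝ := Real.sqrt (‖v.1‖ ^ 2 + ‖v.2‖ ^ 2)

noncomputable def cdist (v w : ℂ × ℂ) : ℝ :=
  ‖v.1 * w.2 - v.2 * w.1‖ / (nrm v * nrm w)

def liftP : Option ℂ → ℂ × ℂ
  | some z => (z, 1)
  | none => (1, 0)

noncomputable def mapv (g : Matrix (Fin 2) (Fin 2) ℂ) (v : ℂ × ℂ) : ℂ × ℂ :=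
  (g 0 0 * v.1 + g 0 1 * v.2, g 1 0 * v.1 + g 1 1 * v.2)

noncomputable def Sg (g : Matrix (Fin 2) (Fin 2) ℂ) : ℝ :=
  ‖g 0 0‖ + ‖g 0 1‖ + ‖g 1 0‖ + ‖g 1 1‖

lemma nrm_nonneg (v : ℂ × ℂ) : 0 ≤ nrm v := Real.sqrt_nonneg _

lemma nrm_pos {v : ℂ × ℂ} (hv : v ≠ 0) : 0 < nrm v := by
  have h1 : v.1 ≠ 0 ∨ v.2 ≠ 0 := by
    by_contra h; push_neg at h; exact hv (Prod.ext h.1 h.2)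
  apply Real.sqrt_pos.2
  rcases h1 with h | h
  · have := norm_pos_iff.mpr h
    nlinarith [sq_nonneg (‖v.2‖)]
  · have := norm_pos_iff.mpr h
    nlinarith [sq_nonneg (‖v.1‖)]

lemma abs_fst_le_nrm (v : ℂ × ℂ) : ‖v.1‖ ≤ nrm v := by
  rw [show ‖v.1‖ = Real.sqrt (‖v.1‖ ^ 2) from
    (Real.sqrt_sq (norm_nonneg _)).symm]
  exact Real.sqrt_le_sqrt (by nlinarith [sq_nonneg (‖v.2‖)])

lemma abs_snd_le_nrm (v : ℂ × ℂ) : ‖v.2‖ ≤ nrm v := by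
  rw [show ‖v.2‖ = Real.sqrt (‖v.2‖ ^ 2) from
    (Real.sqrt_sq (norm_nonneg _)).symm]
  exact Real.sqrt_le_sqrt (by nlinarith [sq_nonneg (‖v.1‖)])

lemma nrm_le_add (v : ℂ × ℂ) : nrm v ≤ ‖v.1‖ + ‖v.2‖ := by
  calc nrm v ≤ Real.sqrt ((‖v.1‖ + ‖v.2‖) ^ 2) :=
        Real.sqrt_le_sqrt (by nlinarith [norm_nonneg v.1, norm_nonneg v.2])
    _ = _ := Real.sqrt_sq (by positivity)

lemma nrm_smul (α : ℂ) (v : ℂ × ℂ) : nrm (α • v) = ‖α‖ * nrm v := by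
  unfold nrm
  simp only [Prod.smul_fst, Prod.smul_snd, smul_eq_mul, norm_mul, mul_pow]
  rw [← mul_add, Real.sqrt_mul (sq_nonneg _), Real.sqrt_sq (norm_nonneg _)]

lemma mapv_mul (A B : Matrix (Fin 2) (Fin 2) ℂ) (v : ℂ × ℂ) :
    mapv (A * B) v = mapv A (mapv B v) := by
  simp only [mapv, Matrix.mul_apply, Fin.sum_univ_two, Prod.mk.injEq]
  constructor <;> ring

lemma mapv_one (v : ℂ × ℂ) : mapv 1 v = v := by
  simp [mapv, Matrix.one_apply]

lemma mapv_ne_zero {g : Matrix (Fin 2) (Fin 2) ℂ} (hg : IsUnit g.det) {v : ℂ × ℂ}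
    (hv : v ≠ 0) : mapv g v ≠ 0 := by
  intro h
  apply hv
  have h1 : mapv g⁻¹ (mapv g v) = v := by
    rw [← mapv_mul, Matrix.nonsing_inv_mul g hg, mapv_one]
  rw [h] at h1
  rw [← h1]
  simp [mapv]

lemma Sg_pos {g : Matrix (Fin 2) (Fin 2) ℂ} (hg : IsUnit g.det) : 0 < Sg g := by
  by_contra h
  push_neg at h
  unfold Sg at h
  have n00 := norm_nonneg (g 0 0)
  have n01 := norm_nonneg (g 0 1)
  have n10 := norm_nonneg (g 1 0)
  have n11 := norm_nonneg (g 1 1)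
  have e00 : g 0 0 = 0 := norm_eq_zero.1 (by linarith)
  have e01 : g 0 1 = 0 := norm_eq_zero.1 (by linarith)
  have e10 : g 1 0 = 0 := norm_eq_zero.1 (by linarith)
  have e11 : g 1 1 = 0 := norm_eq_zero.1 (by linarith)
  have hdet : g.det = 0 := by
    rw [Matrix.det_fin_two, e00, e01, e10, e11]; ring
  rw [hdet] at hg
  exact (by simp : ¬ IsUnit (0:ℂ)) hg

lemma nrm_mapv_le (g : Matrix (Fin 2) (Fin 2) ℂ) (v : ℂ × ℂ) :
    nrm (mapv g v) ≤ Sg g * nrm v := by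
  have h1 := abs_fst_le_nrm v
  have h2 := abs_snd_le_nrm v
  have e1 : ‖g 0 0 * v.1 + g 0 1 * v.2‖
      ≤ (‖g 0 0‖ + ‖g 0 1‖) * nrm v := by
    calc _ ≤ ‖g 0 0 * v.1‖ + ‖g 0 1 * v.2‖ := norm_add_le _ _
      _ = ‖g 0 0‖ * ‖v.1‖ + ‖g 0 1‖ * ‖v.2‖ := by
          simp [norm_mul]
      _ ≤ _ := by nlinarith [norm_nonneg (g 0 0), norm_nonneg (g 0 1)]
  have e2 : ‖g 1 0 * v.1 + g 1 1 * v.2‖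
      ≤ (‖g 1 0‖ + ‖g 1 1‖) * nrm v := by
    calc _ ≤ ‖g 1 0 * v.1‖ + ‖g 1 1 * v.2‖ := norm_add_le _ _
      _ = ‖g 1 0‖ * ‖v.1‖ + ‖g 1 1‖ * ‖v.2‖ := by
          simp [norm_mul]
      _ ≤ _ := by nlinarith [norm_nonneg (g 1 0), norm_nonneg (g 1 1)]
  calc nrm (mapv g v) ≤ ‖(mapv g v).1‖ + ‖(mapv g v).2‖ := nrm_le_add _
    _ ≤ _ := by
        unfold mapv Sg
        dsimp only
        nlinarith [nrm_nonneg v, e1, e2]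

lemma cdist_nonneg (v w : ℂ × ℂ) : 0 ≤ cdist v w :=
  div_nonneg (norm_nonneg _) (mul_nonneg (nrm_nonneg _) (nrm_nonneg _))

lemma cdist_comm (v w : ℂ × ℂ) : cdist v w = cdist w v := by
  unfold cdist
  rw [show w.1 * v.2 - w.2 * v.1 = -(v.1 * w.2 - v.2 * w.1) by ring, norm_neg,
    mul_comm (nrm w)]

lemma cdist_smul_left {α : ℂ} (hα : α ≠ 0) (v w : ℂ × ℂ) : cdist (α • v) w = cdist v w := by
  unfold cdist
  rw [nrm_smul]
  rw [show (α • v).1 * w.2 - (α • v).2 * w.1 = α * (v.1 * w.2 - v.2 * w.1) by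
    simp only [Prod.smul_fst, Prod.smul_snd, smul_eq_mul]; ring]
  rw [norm_mul, mul_assoc, mul_div_mul_left _ _ (norm_ne_zero_iff.mpr hα)]

lemma cdist_smul_right {α : ℂ} (hα : α ≠ 0) (v w : ℂ × ℂ) : cdist v (α • w) = cdist v w := by
  rw [cdist_comm, cdist_smul_left hα, cdist_comm]

lemma liftP_ne_zero (z : Option ℂ) : liftP z ≠ 0 := by
  cases z <;> simp [liftP, Prod.ext_iff]

lemma chordal_eq (z w : Option ℂ) : chordal z w = cdist (liftP z) (liftP w) := by
  cases z <;> cases w <;>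
    simp [chordal, cdist, liftP, nrm, add_comm, norm_neg]

lemma lift_mobius (g : Matrix (Fin 2) (Fin 2) ℂ) (hg : IsUnit g.det) (z : Option ℂ) :
    ∃ α : ℂ, α ≠ 0 ∧ liftP (mobius g z) = α • mapv g (liftP z) := by
  have hnz : mapv g (liftP z) ≠ 0 := mapv_ne_zero hg (liftP_ne_zero z)
  cases z with
  | none =>
    by_cases hc : g 1 0 = 0
    · have ha : g 0 0 ≠ 0 := by
        intro h
        apply hnz
        simp [mapv, liftP, hc, h, Prod.ext_iff]
      refine ⟨(g 0 0)⁻¹, inv_ne_zero ha, ?_⟩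
      simp only [mobius, liftP, mapv, hc, if_pos rfl, Prod.ext_iff, Prod.smul_fst,
        Prod.smul_snd, smul_eq_mul]
      constructor
      · simp only [↓reduceIte]; field_simp; ring
      · simp only [↓reduceIte]; field_simp; ring
    · refine ⟨(g 1 0)⁻¹, inv_ne_zero hc, ?_⟩
      simp only [mobius, liftP, mapv, hc, if_neg hc, Prod.ext_iff, Prod.smul_fst,
        Prod.smul_snd, smul_eq_mul]
      constructor
      · simp only [↓reduceIte]; field_simp; ring
      · simp only [↓reduceIte]; field_simp; ring
  | some x =>
    by_cases hc : g 1 0 * x + g 1 1 = 0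
    · have ha : g 0 0 * x + g 0 1 ≠ 0 := by
        intro h
        apply hnz
        simp only [mapv, liftP, Prod.ext_iff]
        constructor
        · simpa using h
        · simpa using hc
      refine ⟨(g 0 0 * x + g 0 1)⁻¹, inv_ne_zero ha, ?_⟩
      simp only [mobius, liftP, mapv, if_pos hc, Prod.ext_iff, Prod.smul_fst,
        Prod.smul_snd, smul_eq_mul]
      constructor
      · field_simp
      · simp only [mul_one] at hc ⊢
        rw [hc, mul_zero]
    · refine ⟨(g 1 0 * x + g 1 1)⁻¹, inv_ne_zero hc, ?_⟩
      have hc' : g 1 0 * x + g 1 1 ≠ 0 := hc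
      simp only [mobius, liftP, mapv, if_neg hc, Prod.ext_iff, Prod.smul_fst,
        Prod.smul_snd, smul_eq_mul, mul_one]
      constructor
      · field_simp
      · field_simp

lemma cdist_mapv_le (g : Matrix (Fin 2) (Fin 2) ℂ) (hg : IsUnit g.det) (v w : ℂ × ℂ)
    (hv : v ≠ 0) (hw : w ≠ 0) :
    cdist (mapv g v) (mapv g w) ≤ (‖g.det‖ * Sg g⁻¹ ^ 2) * cdist v w := by
  have hS : 0 < Sg g⁻¹ := Sg_pos (Matrix.isUnit_nonsing_inv_det g hg)
  have hNv : 0 < nrm v := nrm_pos hv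
  have hNw : 0 < nrm w := nrm_pos hw
  have hA : 0 < nrm (mapv g v) := nrm_pos (mapv_ne_zero hg hv)
  have hB : 0 < nrm (mapv g w) := nrm_pos (mapv_ne_zero hg hw)
  have hv' : nrm v ≤ Sg g⁻¹ * nrm (mapv g v) := by
    have h := nrm_mapv_le g⁻¹ (mapv g v)
    rwa [← mapv_mul, Matrix.nonsing_inv_mul g hg, mapv_one] at h
  have hw' : nrm w ≤ Sg g⁻¹ * nrm (mapv g w) := by
    have h := nrm_mapv_le g⁻¹ (mapv g w)
    rwa [← mapv_mul, Matrix.nonsing_inv_mul g hg, mapv_one] at h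
  have hcross : ‖(mapv g v).1 * (mapv g w).2 - (mapv g v).2 * (mapv g w).1‖
      = ‖g.det‖ * ‖v.1 * w.2 - v.2 * w.1‖ := by
    rw [← norm_mul]
    congr 1
    rw [Matrix.det_fin_two]
    unfold mapv
    dsimp only
    ring
  unfold cdist
  rw [hcross, ← mul_div_assoc, div_le_div_iff₀ (by positivity) (by positivity)]
  have hX := norm_nonneg (v.1 * w.2 - v.2 * w.1)
  have hD := norm_nonneg g.det
  have h1 : nrm v * nrm w ≤ (Sg g⁻¹ * nrm (mapv g v)) * (Sg g⁻¹ * nrm (mapv g w)) :=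
    mul_le_mul hv' hw' hNw.le (by positivity)
  nlinarith [mul_le_mul_of_nonneg_left h1 (mul_nonneg hD hX)]

lemma mapv_diag (lam : ℂ) (v : ℂ × ℂ) :
    mapv (Matrix.diagonal ![lam, lam⁻¹]) v = (lam * v.1, lam⁻¹ * v.2) := by
  simp [mapv, Matrix.diagonal_apply]

lemma mapv_diag_pow (lam : ℂ) (n : ℕ) (v : ℂ × ℂ) :
    mapv (Matrix.diagonal ![lam, lam⁻¹] ^ n) v = (lam ^ n * v.1, lam⁻¹ ^ n * v.2) := by
  induction n generalizing v with
  | zero => simp [mapv_one]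
  | succ n ih =>
    rw [pow_succ, mapv_mul, mapv_diag, ih]
    dsimp only
    rw [pow_succ, pow_succ, Prod.ext_iff]
    constructor <;> (dsimp only; ring)

lemma matconj_pow (P M : Matrix (Fin 2) (Fin 2) ℂ) (hP : IsUnit P.det) (n : ℕ) :
    (P⁻¹ * M * P) ^ n = P⁻¹ * M ^ n * P := by
  have hPP : P * P⁻¹ = 1 := Matrix.mul_nonsing_inv P hP
  induction n with
  | zero => simp [Matrix.nonsing_inv_mul P hP]
  | succ n ih =>
    calc (P⁻¹ * M * P) ^ (n + 1) = (P⁻¹ * M ^ n * P) * (P⁻¹ * M * P) := by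
          rw [pow_succ, ih]
      _ = P⁻¹ * M ^ n * (P * P⁻¹) * M * P := by
          simp only [Matrix.mul_assoc]
      _ = P⁻¹ * M ^ (n + 1) * P := by
          rw [hPP, Matrix.mul_one, pow_succ]
          simp only [Matrix.mul_assoc]

theorem hyperbolic_iterates_contract (γ : SL2)
    (P : Matrix (Fin 2) (Fin 2) ℂ) (hP : IsUnit P.det)
    (lam : ℂ) (hlam : 1 < ‖lam‖)
    (hdiag : (↑γ : Matrix (Fin 2) (Fin 2) ℂ) = P⁻¹ * Matrix.diagonal ![lam, lam⁻¹] * P)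
    (y₀ z₀ : Option ℂ) (hy : y₀ = mobius P⁻¹ (some 0)) (hz : z₀ = mobius P⁻¹ none) :
    ∃ C₁ > (0:ℝ), ∀ n : ℕ,
      mobius (↑(γ ^ n) : Matrix (Fin 2) (Fin 2) ℂ) ''
          (Dopen y₀ (C₁ * (‖lam‖)⁻¹ ^ n))ᶜ ⊆
        Dclosed z₀ (C₁ * (‖lam‖)⁻¹ ^ n) := by
  have hlam0 : lam ≠ 0 := by
    intro h
    rw [h] at hlam
    simp at hlam
    linarith
  have hPinv : IsUnit (P⁻¹).det := Matrix.isUnit_nonsing_inv_det P hP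
  set D : Matrix (Fin 2) (Fin 2) ℂ := Matrix.diagonal ![lam, lam⁻¹] with hDdef
  set C₁ : ℝ := ‖(P⁻¹).det‖ * Sg P ^ 2 with hC₁def
  have hSgP : 0 < Sg P := Sg_pos hP
  have habsdet : 0 < ‖(P⁻¹).det‖ := norm_pos_iff.mpr hPinv.ne_zero
  have hC₁ : 0 < C₁ := mul_pos habsdet (pow_pos hSgP 2)
  refine ⟨C₁, hC₁, ?_⟩
  intro n x hx
  obtain ⟨w, hw, rfl⟩ := hx
  have hwge : C₁ * (‖lam‖)⁻¹ ^ n ≤ chordal w y₀ := by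
    simpa [Dopen, not_lt] using hw
  set m : ℝ := ‖lam‖ ^ n with hm
  have hm0 : 0 < m := pow_pos (by linarith) n
  have hinv : (‖lam‖)⁻¹ ^ n = m⁻¹ := by rw [inv_pow]
  have hcoe : (↑(γ ^ n) : Matrix (Fin 2) (Fin 2) ℂ) = P⁻¹ * D ^ n * P := by
    rw [Matrix.SpecialLinearGroup.coe_pow, hdiag, matconj_pow P _ hP]
  set vw := liftP w with hvw
  have hvw0 : vw ≠ 0 := liftP_ne_zero w
  set u := mapv P vw with hu
  have hu0 : u ≠ 0 := mapv_ne_zero hP hvw0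
  have hrec : mapv P⁻¹ u = vw := by
    rw [hu, ← mapv_mul, Matrix.nonsing_inv_mul P hP, mapv_one]
  have hLip : ∀ v w' : ℂ × ℂ, v ≠ 0 → w' ≠ 0 →
      cdist (mapv P⁻¹ v) (mapv P⁻¹ w') ≤ C₁ * cdist v w' := by
    intro v w' hv hw'
    have h := cdist_mapv_le P⁻¹ hPinv v w' hv hw'
    rwa [Matrix.nonsing_inv_nonsing_inv P hP] at h
  obtain ⟨α, hα, hαeq⟩ := lift_mobius P⁻¹ hPinv (some 0)
  have hy0 : chordal w y₀ = cdist vw (mapv P⁻¹ ((0:ℂ), 1)) := by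
    rw [hy, chordal_eq, hαeq, cdist_smul_right hα, ← hvw]
    rfl
  have he0 : (((0:ℂ), (1:ℂ)) : ℂ × ℂ) ≠ 0 := by simp [Prod.ext_iff]
  have hlow : C₁ * m⁻¹ ≤ C₁ * cdist u ((0:ℂ),1) := by
    calc C₁ * m⁻¹ = C₁ * (‖lam‖)⁻¹ ^ n := by rw [hinv]
      _ ≤ chordal w y₀ := hwge
      _ = cdist vw (mapv P⁻¹ ((0:ℂ),1)) := hy0
      _ = cdist (mapv P⁻¹ u) (mapv P⁻¹ ((0:ℂ),1)) := by rw [hrec]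
      _ ≤ C₁ * cdist u ((0:ℂ),1) := hLip u _ hu0 he0
  have hn01 : nrm ((0:ℂ),1) = 1 := by unfold nrm; simp
  have hcd : cdist u ((0:ℂ),1) = ‖u.1‖ / nrm u := by
    unfold cdist
    rw [hn01]
    simp
  have hNu : 0 < nrm u := nrm_pos hu0
  have key : nrm u ≤ m * ‖u.1‖ := by
    rw [hcd] at hlow
    have h2 : m⁻¹ ≤ ‖u.1‖ / nrm u := le_of_mul_le_mul_left hlow hC₁
    rw [← one_div, div_le_div_iff₀ hm0 hNu] at h2
    linarith
  have hγdet : IsUnit ((↑(γ ^ n) : Matrix (Fin 2) (Fin 2) ℂ)).det := by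
    rw [Matrix.SpecialLinearGroup.det_coe]; exact isUnit_one
  have hdetD : IsUnit ((D ^ n : Matrix (Fin 2) (Fin 2) ℂ)).det := by
    have hD1 : D.det = 1 := by
      rw [hDdef, Matrix.det_diagonal, Fin.prod_univ_two]
      simp [mul_inv_cancel₀ hlam0]
    rw [Matrix.det_pow, hD1, one_pow]
    exact isUnit_one
  have hDn0 : mapv (D ^ n) u ≠ 0 := mapv_ne_zero hdetD hu0
  have hQ : 0 < nrm (mapv (D ^ n) u) := nrm_pos hDn0
  have he1 : (((1:ℂ), (0:ℂ)) : ℂ × ℂ) ≠ 0 := by simp [Prod.ext_iff]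
  show chordal (mobius (↑(γ ^ n) : Matrix (Fin 2) (Fin 2) ℂ) w) z₀ ≤ _
  rw [hz, chordal_eq]
  obtain ⟨β, hβ, hβeq⟩ := lift_mobius P⁻¹ hPinv none
  obtain ⟨δ, hδ, hδeq⟩ := lift_mobius (↑(γ ^ n) : Matrix (Fin 2) (Fin 2) ℂ) hγdet w
  rw [hβeq, hδeq, cdist_smul_left hδ, cdist_smul_right hβ]
  have hmap : mapv (↑(γ ^ n) : Matrix (Fin 2) (Fin 2) ℂ) (liftP w)
      = mapv P⁻¹ (mapv (D ^ n) u) := by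
    rw [hcoe, mapv_mul, mapv_mul, ← hvw, ← hu]
  have hliftnone : liftP (none : Option ℂ) = ((1:ℂ), (0:ℂ)) := rfl
  have heq : mapv (D ^ n) u = (lam ^ n * u.1, lam⁻¹ ^ n * u.2) := by
    rw [hDdef]; exact mapv_diag_pow lam n u
  have hfst : m * ‖u.1‖ ≤ nrm (mapv (D ^ n) u) := by
    rw [heq, hm]
    have h := abs_fst_le_nrm ((lam ^ n * u.1, lam⁻¹ ^ n * u.2) : ℂ × ℂ)
    simpa [norm_mul, norm_pow] using h
  have hb : ‖u.2‖ ≤ nrm (mapv (D ^ n) u) :=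
    le_trans (abs_snd_le_nrm u) (le_trans key hfst)
  have hform : cdist (mapv (D ^ n) u) ((1:ℂ),0)
      = (m⁻¹ * ‖u.2‖) / nrm (mapv (D ^ n) u) := by
    have h10 : nrm (((1:ℂ),0) : ℂ × ℂ) = 1 := by unfold nrm; simp
    unfold cdist
    rw [h10, mul_one, heq]
    dsimp only
    rw [show lam ^ n * u.1 * 0 - lam⁻¹ ^ n * u.2 = -(lam⁻¹ ^ n * u.2) by ring,
      norm_neg, norm_mul, norm_pow, norm_inv, inv_pow, ← hm, mul_one]
  have hfinal : cdist (mapv (D ^ n) u) ((1:ℂ),0) ≤ m⁻¹ := by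
    rw [hform, div_le_iff₀ hQ]
    exact mul_le_mul_of_nonneg_left hb (inv_nonneg.2 hm0.le)
  rw [hmap, hliftnone, hinv]
  exact le_trans (hLip _ _ hDn0 he1) (mul_le_mul_of_nonneg_left hfinal hC₁.le)
end

section
/- There is a universal constant C₂ > 0 such that for every γ ∈ SL(2,ℂ) with ‖γ‖ > 1, the restriction of the Möbius action of γ to the complement of the open chordal disc D(s, ‖γ‖⁻¹) (where s is the south pole of γ from its Cartan decomposition) is C₂-Lipschitz for the chordal distance. -/
open Complex Set
open scoped Matrix.Norms.L2Operator

lemma one_add_sq_pos (z : ℂ) : 0 < 1 + ‖z‖ ^ 2 := by positivity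

lemma chordal_nonneg (x y : Option ℂ) : 0 ≤ chordal x y := by
  cases x <;> cases y <;> simp [chordal] <;> positivity

lemma eq_of_sq_eq {a b : ℝ} (ha : 0 ≤ a) (hb : 0 ≤ b) (h : a ^ 2 = b ^ 2) : a = b := by
  rw [← Real.sqrt_sq ha, ← Real.sqrt_sq hb, h]

lemma chordal_sq_some_some (u v : ℂ) :
    chordal (some u) (some v) ^ 2 =
      Complex.normSq (u - v) / ((1 + Complex.normSq u) * (1 + Complex.normSq v)) := by
  simp only [chordal]
  rw [div_pow, mul_pow, Real.sq_sqrt (one_add_sq_pos u).le, Real.sq_sqrt (one_add_sq_pos v).le,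
    ← Complex.sq_norm, ← Complex.sq_norm u, ← Complex.sq_norm v]

lemma chordal_sq_some_none (u : ℂ) :
    chordal (some u) none ^ 2 = 1 / (1 + Complex.normSq u) := by
  simp only [chordal]
  rw [div_pow, one_pow, Real.sq_sqrt (one_add_sq_pos u).le, ← Complex.sq_norm]

lemma chordal_sq_none_some (u : ℂ) :
    chordal none (some u) ^ 2 = 1 / (1 + Complex.normSq u) := by
  simp only [chordal]
  rw [div_pow, one_pow, Real.sq_sqrt (one_add_sq_pos u).le, ← Complex.sq_norm]

lemma sqrt_pos' (z : ℂ) : 0 < Real.sqrt (1 + ‖z‖ ^ 2) :=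
  Real.sqrt_pos.mpr (by positivity)

lemma mobius_diag_some (lam : ℂ) (hlam : lam ≠ 0) (z : ℂ) :
    mobius (Matrix.diagonal ![lam, lam⁻¹]) (some z) = some (lam ^ 2 * z) := by
  have h10 : Matrix.diagonal ![lam, lam⁻¹] 1 0 = 0 := Matrix.diagonal_apply_ne _ (by decide)
  have h11 : Matrix.diagonal ![lam, lam⁻¹] 1 1 = lam⁻¹ := Matrix.diagonal_apply_eq _ 1
  have h00 : Matrix.diagonal ![lam, lam⁻¹] 0 0 = lam := Matrix.diagonal_apply_eq _ 0
  have h01 : Matrix.diagonal ![lam, lam⁻¹] 0 1 = 0 := Matrix.diagonal_apply_ne _ (by decide)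
  simp only [mobius, h10, h11, h00, h01, zero_mul, zero_add, add_zero]
  rw [if_neg (inv_ne_zero hlam)]
  congr 1
  field_simp

lemma mobius_diag_none (lam : ℂ) :
    mobius (Matrix.diagonal ![lam, lam⁻¹]) none = none := by
  have h10 : Matrix.diagonal ![lam, lam⁻¹] 1 0 = 0 := Matrix.diagonal_apply_ne _ (by decide)
  simp [mobius, h10]

lemma cond_translate {T : ℝ} (hT : 1 < T) (z : ℂ)
    (h : T⁻¹ ≤ chordal (some z) (some 0)) :
    1 ≤ (T ^ 2 - 1) * ‖z‖ ^ 2 := by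
  have hs := sqrt_pos' z
  have hT0 : 0 < T := lt_trans one_pos hT
  simp only [chordal, sub_zero, norm_zero] at h
  rw [show (0:ℝ) ^ 2 = 0 by ring, add_zero, Real.sqrt_one, mul_one] at h
  rw [inv_le_iff_one_le_mul₀ hT0] at h
  -- h : 1 ≤ T * (abs z / sqrt(1+abs z^2)) hopefully
  have h2 : Real.sqrt (1 + ‖z‖ ^ 2) ≤ T * ‖z‖ := by
    rw [div_mul_eq_mul_div, le_div_iff₀ hs, one_mul] at h
    linarith [h]
  have h3 := Real.sqrt_le_sqrt (le_of_eq (rfl : 1 + ‖z‖ ^ 2 = 1 + ‖z‖ ^ 2))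
  have h4 : 1 + ‖z‖ ^ 2 ≤ (T * ‖z‖) ^ 2 := by
    have := Real.sq_sqrt (by positivity : (0:ℝ) ≤ 1 + ‖z‖ ^ 2)
    nlinarith [Real.sqrt_nonneg (1 + ‖z‖ ^ 2)]
  nlinarith

lemma factor_bound {M a2 : ℝ} (hM : 1 < M) (ha : 0 ≤ a2) (hcond : 1 ≤ (M - 1) * a2) :
    M * (1 + a2) ≤ 2 * (1 + M ^ 2 * a2) := by
  nlinarith [mul_nonneg (sub_nonneg.mpr hcond) (le_of_lt (lt_trans one_pos hM)),
    mul_le_mul_of_nonneg_right (le_of_lt hM) (mul_nonneg (le_of_lt (lt_trans one_pos hM)) ha)]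

lemma sqrt_factor {M a2 : ℝ} (hM : 1 < M) (ha : 0 ≤ a2) (hcond : 1 ≤ (M - 1) * a2) :
    Real.sqrt M * Real.sqrt (1 + a2) ≤ Real.sqrt 2 * Real.sqrt (1 + M ^ 2 * a2) := by
  rw [← Real.sqrt_mul (by linarith), ← Real.sqrt_mul (by norm_num)]
  exact Real.sqrt_le_sqrt (factor_bound hM ha hcond)

lemma diag_estimate (lam : ℂ) (T : ℝ) (hT : 1 < T) (hTlam : T ≤ ‖lam‖)
    (x y : Option ℂ)
    (hx : T⁻¹ ≤ chordal x (some 0)) (hy : T⁻¹ ≤ chordal y (some 0)) :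
    chordal (mobius (Matrix.diagonal ![lam, lam⁻¹]) x)
      (mobius (Matrix.diagonal ![lam, lam⁻¹]) y) ≤ 2 * chordal x y := by
  have hlamT : 1 < ‖lam‖ := lt_of_lt_of_le hT hTlam
  have hlam : lam ≠ 0 := by
    intro h0; rw [h0] at hlamT; simp at hlamT; linarith
  set M : ℝ := ‖lam‖ ^ 2 with hMdef
  have hM1 : 1 < M := by nlinarith
  have habs2 : ‖lam ^ 2‖ = M := by
    rw [norm_pow]
  have hcondM : ∀ z : ℂ, T⁻¹ ≤ chordal (some z) (some 0) →
      1 ≤ (M - 1) * ‖z‖ ^ 2 := by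
    intro z hz
    have h1 := cond_translate hT z hz
    have hT2M : T ^ 2 ≤ M := by nlinarith [lt_trans one_pos hT]
    nlinarith [sq_nonneg (‖z‖)]
  match x, y with
  | none, none =>
    rw [mobius_diag_none]
    simp [chordal]
  | none, some z₂ =>
    rw [mobius_diag_none, mobius_diag_some lam hlam]
    simp only [chordal]
    rw [mul_one_div, div_le_div_iff₀ (sqrt_pos' (lam ^ 2 * z₂)) (sqrt_pos' z₂), one_mul]
    have hzz : ‖lam ^ 2 * z₂‖ ^ 2 = M ^ 2 * ‖z₂‖ ^ 2 := by
      rw [norm_mul, habs2]; ring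
    rw [hzz]
    have step : Real.sqrt (1 + ‖z₂‖ ^ 2) ≤ Real.sqrt (1 + M ^ 2 * ‖z₂‖ ^ 2) := by
      apply Real.sqrt_le_sqrt
      have hM2 : (1:ℝ) ≤ M ^ 2 := by nlinarith
      nlinarith [mul_le_mul_of_nonneg_right hM2 (sq_nonneg (‖z₂‖))]
    nlinarith [Real.sqrt_nonneg (1 + M ^ 2 * ‖z₂‖ ^ 2)]
  | some z₁, none =>
    rw [mobius_diag_none, mobius_diag_some lam hlam]
    simp only [chordal]
    rw [mul_one_div, div_le_div_iff₀ (sqrt_pos' (lam ^ 2 * z₁)) (sqrt_pos' z₁), one_mul]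
    have hzz : ‖lam ^ 2 * z₁‖ ^ 2 = M ^ 2 * ‖z₁‖ ^ 2 := by
      rw [norm_mul, habs2]; ring
    rw [hzz]
    have step : Real.sqrt (1 + ‖z₁‖ ^ 2) ≤ Real.sqrt (1 + M ^ 2 * ‖z₁‖ ^ 2) := by
      apply Real.sqrt_le_sqrt
      have hM2 : (1:ℝ) ≤ M ^ 2 := by nlinarith
      nlinarith [mul_le_mul_of_nonneg_right hM2 (sq_nonneg (‖z₁‖))]
    nlinarith [Real.sqrt_nonneg (1 + M ^ 2 * ‖z₁‖ ^ 2)]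
  | some z₁, some z₂ =>
    rw [mobius_diag_some lam hlam, mobius_diag_some lam hlam]
    simp only [chordal]
    have hnum : ‖lam ^ 2 * z₁ - lam ^ 2 * z₂‖ = M * ‖z₁ - z₂‖ := by
      rw [show lam ^ 2 * z₁ - lam ^ 2 * z₂ = lam ^ 2 * (z₁ - z₂) by ring, norm_mul, habs2]
    have hz1 : ‖lam ^ 2 * z₁‖ ^ 2 = M ^ 2 * ‖z₁‖ ^ 2 := by
      rw [norm_mul, habs2]; ring
    have hz2 : ‖lam ^ 2 * z₂‖ ^ 2 = M ^ 2 * ‖z₂‖ ^ 2 := by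
      rw [norm_mul, habs2]; ring
    rw [hnum, hz1, hz2, ← mul_div_assoc]
    have hM0 : (0:ℝ) ≤ M := by linarith
    have key : M * (Real.sqrt (1 + ‖z₁‖ ^ 2) * Real.sqrt (1 + ‖z₂‖ ^ 2))
        ≤ 2 * (Real.sqrt (1 + M ^ 2 * ‖z₁‖ ^ 2)
            * Real.sqrt (1 + M ^ 2 * ‖z₂‖ ^ 2)) := by
      have f1 := sqrt_factor hM1 (sq_nonneg (‖z₁‖)) (hcondM z₁ hx)
      have f2 := sqrt_factor hM1 (sq_nonneg (‖z₂‖)) (hcondM z₂ hy)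
      have hmul := mul_le_mul f1 f2
        (mul_nonneg (Real.sqrt_nonneg _) (Real.sqrt_nonneg _))
        (mul_nonneg (Real.sqrt_nonneg _) (Real.sqrt_nonneg _))
      calc M * (Real.sqrt (1 + ‖z₁‖ ^ 2) * Real.sqrt (1 + ‖z₂‖ ^ 2))
          = (Real.sqrt M * Real.sqrt (1 + ‖z₁‖ ^ 2))
            * (Real.sqrt M * Real.sqrt (1 + ‖z₂‖ ^ 2)) := by
            rw [show (Real.sqrt M * Real.sqrt (1 + ‖z₁‖ ^ 2))
              * (Real.sqrt M * Real.sqrt (1 + ‖z₂‖ ^ 2))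
              = (Real.sqrt M * Real.sqrt M) * (Real.sqrt (1 + ‖z₁‖ ^ 2)
                * Real.sqrt (1 + ‖z₂‖ ^ 2)) by ring,
              Real.mul_self_sqrt hM0]
        _ ≤ (Real.sqrt 2 * Real.sqrt (1 + M ^ 2 * ‖z₁‖ ^ 2))
            * (Real.sqrt 2 * Real.sqrt (1 + M ^ 2 * ‖z₂‖ ^ 2)) := hmul
        _ = 2 * (Real.sqrt (1 + M ^ 2 * ‖z₁‖ ^ 2)
            * Real.sqrt (1 + M ^ 2 * ‖z₂‖ ^ 2)) := by
            rw [show (Real.sqrt 2 * Real.sqrt (1 + M ^ 2 * ‖z₁‖ ^ 2))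
              * (Real.sqrt 2 * Real.sqrt (1 + M ^ 2 * ‖z₂‖ ^ 2))
              = (Real.sqrt 2 * Real.sqrt 2) * (Real.sqrt (1 + M ^ 2 * ‖z₁‖ ^ 2)
                * Real.sqrt (1 + M ^ 2 * ‖z₂‖ ^ 2)) by ring,
              Real.mul_self_sqrt (by norm_num)]
    rw [div_le_div_iff₀ (by positivity) (by positivity)]
    nlinarith [mul_le_mul_of_nonneg_left key (norm_nonneg (z₁ - z₂))]

lemma su2_entries {k : Matrix (Fin 2) (Fin 2) ℂ} (h : SU2 k) :
    (starRingEnd ℂ) (k 0 0) * k 0 0 + (starRingEnd ℂ) (k 1 0) * k 1 0 = 1 ∧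
    (starRingEnd ℂ) (k 0 0) * k 0 1 + (starRingEnd ℂ) (k 1 0) * k 1 1 = 0 ∧
    (starRingEnd ℂ) (k 0 1) * k 0 1 + (starRingEnd ℂ) (k 1 1) * k 1 1 = 1 ∧
    k 1 0 * (starRingEnd ℂ) (k 1 0) + k 1 1 * (starRingEnd ℂ) (k 1 1) = 1 ∧
    k 0 0 * k 1 1 - k 0 1 * k 1 0 = 1 := by
  obtain ⟨hdet, hu⟩ := h
  have hu' : k * k.conjTranspose = 1 := mul_eq_one_comm.mp hu
  have e1 := congrFun (congrFun hu 0) 0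
  have e2 := congrFun (congrFun hu 0) 1
  have e3 := congrFun (congrFun hu 1) 1
  have e5 := congrFun (congrFun hu' 1) 1
  simp [Matrix.mul_apply, Matrix.conjTranspose_apply, Fin.sum_univ_two, Matrix.one_apply] at e1 e2 e3 e5
  rw [Matrix.det_fin_two] at hdet
  exact ⟨e1, e2, e3, e5, hdet⟩

lemma su2_norm_line {k : Matrix (Fin 2) (Fin 2) ℂ} (h : SU2 k) (z : ℂ) :
    Complex.normSq (k 0 0 * z + k 0 1) + Complex.normSq (k 1 0 * z + k 1 1)
      = 1 + Complex.normSq z := by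
  obtain ⟨e1, e2, e3, e5, hdet⟩ := su2_entries h
  have e2' := congrArg (starRingEnd ℂ) e2
  simp only [map_add, map_mul, Complex.conj_conj, map_zero] at e2'
  have key : (k 0 0 * z + k 0 1) * (starRingEnd ℂ) (k 0 0 * z + k 0 1)
      + (k 1 0 * z + k 1 1) * (starRingEnd ℂ) (k 1 0 * z + k 1 1)
      = 1 + z * (starRingEnd ℂ) z := by
    simp only [map_add, map_mul]
    linear_combination (z * (starRingEnd ℂ) z) * e1 + z * e2' + (starRingEnd ℂ) z * e2 + e3
  rw [Complex.mul_conj, Complex.mul_conj, Complex.mul_conj] at key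
  exact_mod_cast key

lemma su2_det_line {k : Matrix (Fin 2) (Fin 2) ℂ} (h : SU2 k) (z₁ z₂ : ℂ) :
    (k 0 0 * z₁ + k 0 1) * (k 1 0 * z₂ + k 1 1)
      - (k 0 0 * z₂ + k 0 1) * (k 1 0 * z₁ + k 1 1) = z₁ - z₂ := by
  obtain ⟨-, -, -, -, hdet⟩ := su2_entries h
  linear_combination (z₁ - z₂) * hdet

lemma div_div_helper {a b c : ℝ} (hc : c ≠ 0) : (a / c) / (b / c) = a / b := by
  rcases eq_or_ne b 0 with rfl | hb
  · simp
  · field_simp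

lemma chordal_mobius_su2 {k : Matrix (Fin 2) (Fin 2) ℂ} (h : SU2 k) (x y : Option ℂ) :
    chordal (mobius k x) (mobius k y) = chordal x y := by
  obtain ⟨e1, e2, e3, e5, hdet⟩ := su2_entries h
  have hNS : ∀ z : ℂ, k 1 0 * z + k 1 1 = 0 →
      Complex.normSq (k 0 0 * z + k 0 1) = 1 + Complex.normSq z := by
    intro z hz
    have := su2_norm_line h z
    rw [hz] at this; simpa using this
  have hc1 : ∀ z : ℂ, 0 < 1 + Complex.normSq z := fun z => by
    have := Complex.normSq_nonneg z; linarith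
  have hac : Complex.normSq (k 0 0) + Complex.normSq (k 1 0) = 1 := by
    have h' : k 0 0 * (starRingEnd ℂ) (k 0 0) + k 1 0 * (starRingEnd ℂ) (k 1 0) = 1 := by
      linear_combination e1
    rw [Complex.mul_conj, Complex.mul_conj] at h'
    exact_mod_cast h'
  have hcd : Complex.normSq (k 1 0) + Complex.normSq (k 1 1) = 1 := by
    have h' := e5
    rw [Complex.mul_conj, Complex.mul_conj] at h'
    exact_mod_cast h'
  match x, y with
  | some z₁, some z₂ =>
    by_cases hw1 : k 1 0 * z₁ + k 1 1 = 0 <;> by_cases hw2 : k 1 0 * z₂ + k 1 1 = 0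
    · -- both denominators zero : z₁ = z₂
      have hc : k 1 0 ≠ 0 := by
        intro hc0
        rw [hc0, zero_mul, zero_add] at hw1
        rw [hc0, hw1] at hdet
        simp at hdet
      have hz : z₁ = z₂ := by
        have : k 1 0 * (z₁ - z₂) = 0 := by linear_combination hw1 - hw2
        rcases mul_eq_zero.mp this with h' | h'
        · exact absurd h' hc
        · exact sub_eq_zero.mp h'
      simp only [mobius, if_pos hw1, if_pos hw2, hz]
      simp [chordal]
    · -- w₁ = 0, w₂ ≠ 0
      simp only [mobius, if_pos hw1, if_neg hw2]
      apply eq_of_sq_eq (chordal_nonneg _ _) (chordal_nonneg _ _)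
      rw [chordal_sq_none_some, chordal_sq_some_some, Complex.normSq_div]
      have hn1 := hNS z₁ hw1
      have hn2 := su2_norm_line h z₂
      have hW : Complex.normSq (k 1 0 * z₂ + k 1 1) ≠ 0 := fun h0 => hw2 (Complex.normSq_eq_zero.mp h0)
      have hprod : Complex.normSq (k 0 0 * z₁ + k 0 1) * Complex.normSq (k 1 0 * z₂ + k 1 1)
          = Complex.normSq (z₁ - z₂) := by
        rw [← Complex.normSq_mul]
        congr 1
        linear_combination su2_det_line h z₁ z₂ + (k 0 0 * z₂ + k 0 1) * hw1
      rw [hn1] at hprod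
      have g2 : 1 + Complex.normSq (k 0 0 * z₂ + k 0 1) / Complex.normSq (k 1 0 * z₂ + k 1 1)
          = (1 + Complex.normSq z₂) / Complex.normSq (k 1 0 * z₂ + k 1 1) := by
        rw [eq_div_iff hW, add_mul, div_mul_cancel₀ _ hW]
        linarith
      rw [g2, one_div_div, ← hprod, mul_div_mul_left _ _ (ne_of_gt (hc1 z₁))]
    · -- w₁ ≠ 0, w₂ = 0
      simp only [mobius, if_neg hw1, if_pos hw2]
      apply eq_of_sq_eq (chordal_nonneg _ _) (chordal_nonneg _ _)
      rw [chordal_sq_some_none, chordal_sq_some_some, Complex.normSq_div]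
      have hn2 := hNS z₂ hw2
      have hn1 := su2_norm_line h z₁
      have hW : Complex.normSq (k 1 0 * z₁ + k 1 1) ≠ 0 := fun h0 => hw1 (Complex.normSq_eq_zero.mp h0)
      have hswap : Complex.normSq (z₁ - z₂) = Complex.normSq (z₂ - z₁) := by
        rw [← Complex.normSq_neg, neg_sub]
      have hprod : Complex.normSq (k 0 0 * z₂ + k 0 1) * Complex.normSq (k 1 0 * z₁ + k 1 1)
          = Complex.normSq (z₂ - z₁) := by
        rw [← Complex.normSq_mul]
        congr 1
        linear_combination -su2_det_line h z₁ z₂ + (k 0 0 * z₁ + k 0 1) * hw2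
      rw [hn2] at hprod
      have g1 : 1 + Complex.normSq (k 0 0 * z₁ + k 0 1) / Complex.normSq (k 1 0 * z₁ + k 1 1)
          = (1 + Complex.normSq z₁) / Complex.normSq (k 1 0 * z₁ + k 1 1) := by
        rw [eq_div_iff hW, add_mul, div_mul_cancel₀ _ hW]
        linarith
      rw [g1, one_div_div, hswap, ← hprod, mul_comm (1 + Complex.normSq z₁),
        mul_div_mul_left _ _ (ne_of_gt (hc1 z₂))]
    · -- both nonzero
      simp only [mobius, if_neg hw1, if_neg hw2]
      apply eq_of_sq_eq (chordal_nonneg _ _) (chordal_nonneg _ _)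
      rw [chordal_sq_some_some, chordal_sq_some_some]
      have hn1 := su2_norm_line h z₁
      have hn2 := su2_norm_line h z₂
      have hW1 : Complex.normSq (k 1 0 * z₁ + k 1 1) ≠ 0 := fun h0 => hw1 (Complex.normSq_eq_zero.mp h0)
      have hW2 : Complex.normSq (k 1 0 * z₂ + k 1 1) ≠ 0 := fun h0 => hw2 (Complex.normSq_eq_zero.mp h0)
      have key : (k 0 0 * z₁ + k 0 1) / (k 1 0 * z₁ + k 1 1)
          - (k 0 0 * z₂ + k 0 1) / (k 1 0 * z₂ + k 1 1)
          = (z₁ - z₂) / ((k 1 0 * z₁ + k 1 1) * (k 1 0 * z₂ + k 1 1)) := by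
        rw [div_sub_div _ _ hw1 hw2]
        rw [div_eq_div_iff (mul_ne_zero hw1 hw2) (mul_ne_zero hw1 hw2)]
        linear_combination ((k 1 0 * z₁ + k 1 1) * (k 1 0 * z₂ + k 1 1)) * su2_det_line h z₁ z₂
      rw [key, Complex.normSq_div, Complex.normSq_div, Complex.normSq_div, Complex.normSq_mul]
      have g1 : 1 + Complex.normSq (k 0 0 * z₁ + k 0 1) / Complex.normSq (k 1 0 * z₁ + k 1 1)
          = (1 + Complex.normSq z₁) / Complex.normSq (k 1 0 * z₁ + k 1 1) := by
        rw [eq_div_iff hW1, add_mul, div_mul_cancel₀ _ hW1]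
        linarith
      have g2 : 1 + Complex.normSq (k 0 0 * z₂ + k 0 1) / Complex.normSq (k 1 0 * z₂ + k 1 1)
          = (1 + Complex.normSq z₂) / Complex.normSq (k 1 0 * z₂ + k 1 1) := by
        rw [eq_div_iff hW2, add_mul, div_mul_cancel₀ _ hW2]
        linarith
      rw [g1, g2, div_mul_div_comm, div_div_helper (mul_ne_zero hW1 hW2)]
  | some z₁, none =>
    by_cases hc : k 1 0 = 0
    · have hd1 : Complex.normSq (k 1 1) = 1 := by
        rw [hc] at hcd; simpa using hcd
      have hw1 : k 1 0 * z₁ + k 1 1 ≠ 0 := by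
        rw [hc, zero_mul, zero_add]
        intro h0; rw [h0] at hd1; simp at hd1
      simp only [mobius, if_pos hc, if_neg hw1]
      apply eq_of_sq_eq (chordal_nonneg _ _) (chordal_nonneg _ _)
      rw [chordal_sq_some_none, chordal_sq_some_none, Complex.normSq_div]
      have hn1 := su2_norm_line h z₁
      have hwv : Complex.normSq (k 1 0 * z₁ + k 1 1) = 1 := by
        rw [hc, zero_mul, zero_add, hd1]
      rw [hwv, div_one]
      have : Complex.normSq (k 0 0 * z₁ + k 0 1) = Complex.normSq z₁ := by
        rw [hwv] at hn1; linarith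
      rw [this]
    · simp only [mobius, if_neg hc]
      have hC : Complex.normSq (k 1 0) ≠ 0 := fun h0 => hc (Complex.normSq_eq_zero.mp h0)
      by_cases hw1 : k 1 0 * z₁ + k 1 1 = 0
      · simp only [if_pos hw1]
        apply eq_of_sq_eq (chordal_nonneg _ _) (chordal_nonneg _ _)
        rw [chordal_sq_none_some, chordal_sq_some_none, Complex.normSq_div]
        have hn1 := hNS z₁ hw1
        have hCN : Complex.normSq (k 1 0) * Complex.normSq (k 0 0 * z₁ + k 0 1) = 1 := by
          rw [← Complex.normSq_mul]
          have h2 : k 1 0 * (k 0 0 * z₁ + k 0 1) = -1 := by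
            linear_combination (k 0 0) * hw1 - hdet
          rw [h2]; simp
        have g : 1 + Complex.normSq (k 0 0) / Complex.normSq (k 1 0)
            = 1 / Complex.normSq (k 1 0) := by
          field_simp
          linarith
        rw [g, one_div_one_div, eq_div_iff (ne_of_gt (hc1 z₁))]
        rw [hn1] at hCN
        linear_combination hCN
      · simp only [if_neg hw1]
        apply eq_of_sq_eq (chordal_nonneg _ _) (chordal_nonneg _ _)
        rw [chordal_sq_some_some, chordal_sq_some_none]
        have hn1 := su2_norm_line h z₁
        have hW1 : Complex.normSq (k 1 0 * z₁ + k 1 1) ≠ 0 := fun h0 => hw1 (Complex.normSq_eq_zero.mp h0)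
        have key : (k 0 0 * z₁ + k 0 1) / (k 1 0 * z₁ + k 1 1) - k 0 0 / k 1 0
            = -1 / ((k 1 0 * z₁ + k 1 1) * k 1 0) := by
          rw [div_sub_div _ _ hw1 hc, div_eq_div_iff (mul_ne_zero hw1 hc) (mul_ne_zero hw1 hc)]
          linear_combination -((k 1 0 * z₁ + k 1 1) * k 1 0) * hdet
        rw [key, Complex.normSq_div, Complex.normSq_div, Complex.normSq_div, Complex.normSq_mul]
        simp only [Complex.normSq_neg, Complex.normSq_one]
        have g1 : 1 + Complex.normSq (k 0 0 * z₁ + k 0 1) / Complex.normSq (k 1 0 * z₁ + k 1 1)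
            = (1 + Complex.normSq z₁) / Complex.normSq (k 1 0 * z₁ + k 1 1) := by
          rw [eq_div_iff hW1, add_mul, div_mul_cancel₀ _ hW1]
          linarith
        have g2 : 1 + Complex.normSq (k 0 0) / Complex.normSq (k 1 0)
            = 1 / Complex.normSq (k 1 0) := by
          field_simp
          linarith
        rw [g1, g2, div_mul_div_comm, mul_one, div_div_helper (mul_ne_zero hW1 hC)]
  | none, some z₂ =>
    by_cases hc : k 1 0 = 0
    · have hd1 : Complex.normSq (k 1 1) = 1 := by
        rw [hc] at hcd; simpa using hcd
      have hw2 : k 1 0 * z₂ + k 1 1 ≠ 0 := by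
        rw [hc, zero_mul, zero_add]
        intro h0; rw [h0] at hd1; simp at hd1
      simp only [mobius, if_pos hc, if_neg hw2]
      apply eq_of_sq_eq (chordal_nonneg _ _) (chordal_nonneg _ _)
      rw [chordal_sq_none_some, chordal_sq_none_some, Complex.normSq_div]
      have hn2 := su2_norm_line h z₂
      have hwv : Complex.normSq (k 1 0 * z₂ + k 1 1) = 1 := by
        rw [hc, zero_mul, zero_add, hd1]
      rw [hwv, div_one]
      have : Complex.normSq (k 0 0 * z₂ + k 0 1) = Complex.normSq z₂ := by
        rw [hwv] at hn2; linarith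
      rw [this]
    · simp only [mobius, if_neg hc]
      have hC : Complex.normSq (k 1 0) ≠ 0 := fun h0 => hc (Complex.normSq_eq_zero.mp h0)
      by_cases hw2 : k 1 0 * z₂ + k 1 1 = 0
      · simp only [if_pos hw2]
        apply eq_of_sq_eq (chordal_nonneg _ _) (chordal_nonneg _ _)
        rw [chordal_sq_some_none, chordal_sq_none_some, Complex.normSq_div]
        have hn2 := hNS z₂ hw2
        have hCN : Complex.normSq (k 1 0) * Complex.normSq (k 0 0 * z₂ + k 0 1) = 1 := by
          rw [← Complex.normSq_mul]
          have h2 : k 1 0 * (k 0 0 * z₂ + k 0 1) = -1 := by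
            linear_combination (k 0 0) * hw2 - hdet
          rw [h2]; simp
        have g : 1 + Complex.normSq (k 0 0) / Complex.normSq (k 1 0)
            = 1 / Complex.normSq (k 1 0) := by
          field_simp
          linarith
        rw [g, one_div_one_div, eq_div_iff (ne_of_gt (hc1 z₂))]
        rw [hn2] at hCN
        linear_combination hCN
      · simp only [if_neg hw2]
        apply eq_of_sq_eq (chordal_nonneg _ _) (chordal_nonneg _ _)
        rw [chordal_sq_some_some, chordal_sq_none_some]
        have hn2 := su2_norm_line h z₂
        have hW2 : Complex.normSq (k 1 0 * z₂ + k 1 1) ≠ 0 := fun h0 => hw2 (Complex.normSq_eq_zero.mp h0)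
        have key : k 0 0 / k 1 0 - (k 0 0 * z₂ + k 0 1) / (k 1 0 * z₂ + k 1 1)
            = 1 / (k 1 0 * (k 1 0 * z₂ + k 1 1)) := by
          rw [div_sub_div _ _ hc hw2, div_eq_div_iff (mul_ne_zero hc hw2) (mul_ne_zero hc hw2)]
          linear_combination (k 1 0 * (k 1 0 * z₂ + k 1 1)) * hdet
        rw [key, Complex.normSq_div, Complex.normSq_div, Complex.normSq_div, Complex.normSq_mul]
        simp only [Complex.normSq_one]
        have g2 : 1 + Complex.normSq (k 0 0 * z₂ + k 0 1) / Complex.normSq (k 1 0 * z₂ + k 1 1)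
            = (1 + Complex.normSq z₂) / Complex.normSq (k 1 0 * z₂ + k 1 1) := by
          rw [eq_div_iff hW2, add_mul, div_mul_cancel₀ _ hW2]
          linarith
        have g : 1 + Complex.normSq (k 0 0) / Complex.normSq (k 1 0)
            = 1 / Complex.normSq (k 1 0) := by
          field_simp
          linarith
        rw [g, g2, div_mul_div_comm, one_mul, div_div_helper (mul_ne_zero hC hW2)]
  | none, none =>
    by_cases hc : k 1 0 = 0
    · simp [mobius, hc, chordal]
    · simp [mobius, hc, chordal]

lemma mobius_one (x : Option ℂ) : mobius 1 x = x := by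
  match x with
  | some z => simp [mobius, Matrix.one_apply]
  | none => simp [mobius, Matrix.one_apply]

lemma mobius_comp {g h : Matrix (Fin 2) (Fin 2) ℂ} (hh : h.det ≠ 0) (x : Option ℂ) :
    mobius (g * h) x = mobius g (mobius h x) := by
  rw [Matrix.det_fin_two] at hh
  have hmul : ∀ i j, (g * h) i j = g i 0 * h 0 j + g i 1 * h 1 j := by
    intro i j
    simp [Matrix.mul_apply, Fin.sum_univ_two]
  match x with
  | some z =>
    by_cases hw : h 1 0 * z + h 1 1 = 0
    · have hN : h 0 0 * z + h 0 1 ≠ 0 := by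
        intro h0
        apply hh
        by_cases hz10 : h 1 0 = 0
        · rw [hz10, zero_mul, zero_add] at hw
          rw [hz10, hw]; ring
        · have hz : z = -(h 1 1) / h 1 0 := by
            field_simp
            linear_combination hw
          rw [hz] at h0
          field_simp at h0
          linear_combination -h0
      simp only [mobius, if_pos hw]
      have hden : (g * h) 1 0 * z + (g * h) 1 1 = g 1 0 * (h 0 0 * z + h 0 1) := by
        rw [hmul, hmul]
        linear_combination g 1 1 * hw
      have hnum : (g * h) 0 0 * z + (g * h) 0 1 = g 0 0 * (h 0 0 * z + h 0 1) := by
        rw [hmul, hmul]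
        linear_combination g 0 1 * hw
      by_cases hg : g 1 0 = 0
      · simp only [mobius, if_pos hg]
        rw [if_pos]
        rw [hden, hg, zero_mul]
      · simp only [mobius, if_neg hg]
        rw [if_neg, hden, hnum, mul_div_mul_right _ _ hN]
        rw [hden]
        exact mul_ne_zero hg hN
    · simp only [mobius, if_neg hw]
      have hden : (g * h) 1 0 * z + (g * h) 1 1
          = (g 1 0 * ((h 0 0 * z + h 0 1) / (h 1 0 * z + h 1 1)) + g 1 1) * (h 1 0 * z + h 1 1) := by
        rw [hmul, hmul]
        field_simp
        ring
      have hnum : (g * h) 0 0 * z + (g * h) 0 1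
          = (g 0 0 * ((h 0 0 * z + h 0 1) / (h 1 0 * z + h 1 1)) + g 0 1) * (h 1 0 * z + h 1 1) := by
        rw [hmul, hmul]
        field_simp
        ring
      by_cases hg : g 1 0 * ((h 0 0 * z + h 0 1) / (h 1 0 * z + h 1 1)) + g 1 1 = 0
      · rw [if_pos, if_pos hg]
        rw [hden, hg, zero_mul]
      · rw [if_neg, if_neg hg, hden, hnum, mul_div_mul_right _ _ hw]
        rw [hden]
        exact mul_ne_zero hg hw
  | none =>
    by_cases hz10 : h 1 0 = 0
    · have h00 : h 0 0 ≠ 0 := by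
        intro h0
        apply hh
        rw [h0, hz10]; ring
      simp only [mobius, if_pos hz10]
      have hden : (g * h) 1 0 = g 1 0 * h 0 0 := by
        rw [hmul, hz10, mul_zero, add_zero]
      have hnum : (g * h) 0 0 = g 0 0 * h 0 0 := by
        rw [hmul, hz10, mul_zero, add_zero]
      by_cases hg : g 1 0 = 0
      · simp only [mobius, if_pos hg]
        rw [if_pos]
        rw [hden, hg, zero_mul]
      · simp only [mobius, if_neg hg]
        rw [if_neg, hden, hnum, mul_div_mul_right _ _ h00]
        rw [hden]
        exact mul_ne_zero hg h00
    · simp only [mobius, if_neg hz10]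
      have hden : (g * h) 1 0 = (g 1 0 * (h 0 0 / h 1 0) + g 1 1) * h 1 0 := by
        rw [hmul]
        field_simp
      have hnum : (g * h) 0 0 = (g 0 0 * (h 0 0 / h 1 0) + g 0 1) * h 1 0 := by
        rw [hmul]
        field_simp
      by_cases hg : g 1 0 * (h 0 0 / h 1 0) + g 1 1 = 0
      · rw [if_pos, if_pos hg]
        rw [hden, hg, zero_mul]
      · rw [if_neg, if_neg hg, hden, hnum, mul_div_mul_right _ _ hz10]
        rw [hden]
        exact mul_ne_zero hg hz10

lemma opNorm_eq_norm (g : Matrix (Fin 2) (Fin 2) ℂ) : opNorm g = ‖g‖ := rfl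

lemma opNorm_mul_le (g h : Matrix (Fin 2) (Fin 2) ℂ) :
    opNorm (g * h) ≤ opNorm g * opNorm h := by
  simp only [opNorm_eq_norm]
  exact Matrix.l2_opNorm_mul g h

lemma opNorm_su2 {k : Matrix (Fin 2) (Fin 2) ℂ} (h : SU2 k) : opNorm k = 1 := by
  rw [opNorm_eq_norm]
  apply CStarRing.norm_of_mem_unitary
  rw [Unitary.mem_iff, Matrix.star_eq_conjTranspose]
  exact ⟨h.2, mul_eq_one_comm.mp h.2⟩

lemma opNorm_diag_le (lam : ℂ) (h : 1 ≤ ‖lam‖) :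
    opNorm (Matrix.diagonal ![lam, lam⁻¹]) ≤ ‖lam‖ := by
  have hlam : lam ≠ 0 := by
    intro h0; rw [h0] at h; simp at h; linarith
  apply ContinuousLinearMap.opNorm_le_bound _ (le_trans zero_le_one h)
  intro v
  rw [LinearMap.coe_toContinuousLinearMap', Matrix.toEuclideanLin_apply]
  rw [EuclideanSpace.norm_eq, EuclideanSpace.norm_eq]
  have hv : ∀ i, (WithLp.equiv 2 (Fin 2 → ℂ)).symm
      ((Matrix.diagonal ![lam, lam⁻¹]).mulVec ((WithLp.equiv 2 (Fin 2 → ℂ)) v)) i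
      = ![lam, lam⁻¹] i * v i := by
    intro i
    fin_cases i <;> simp [Matrix.mulVec_diagonal]
  simp only [hv]
  rw [← Real.sqrt_sq (le_trans zero_le_one h), ← Real.sqrt_mul (by positivity)]
  apply Real.sqrt_le_sqrt
  rw [Fin.sum_univ_two, Fin.sum_univ_two]
  simp only [Matrix.mulVec_diagonal, Matrix.cons_val_zero, Matrix.cons_val_one, Matrix.head_cons, norm_mul]
  have h1 : ‖lam⁻¹‖ ≤ ‖lam‖ := by
    rw [norm_inv]
    calc (‖lam‖)⁻¹ ≤ 1 := by
          rw [inv_le_one_iff₀]; right; exact h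
    _ ≤ ‖lam‖ := h
  have h0 : (0:ℝ) ≤ ‖v 0‖ := norm_nonneg _
  have h0' : (0:ℝ) ≤ ‖v 1‖ := norm_nonneg _
  have h2 : ‖lam⁻¹‖ ^ 2 ≤ ‖lam‖ ^ 2 := by
    nlinarith [norm_nonneg lam⁻¹]
  nlinarith [mul_le_mul_of_nonneg_right h2 (sq_nonneg (‖v 1‖))]


theorem uniform_lipschitz_outside_south_disc :
    ∃ C₂ > (0:ℝ), ∀ γ : SL2, 1 < opNorm ↑γ →
      ∀ (k k' : Matrix (Fin 2) (Fin 2) ℂ) (lam : ℂ),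
        SU2 k → SU2 k' → 1 ≤ ‖lam‖ →
        (↑γ : Matrix (Fin 2) (Fin 2) ℂ) = k * Matrix.diagonal ![lam, lam⁻¹] * k' →
        ∀ x y : Option ℂ,
          x ∈ (Dopen (mobius k'⁻¹ (some 0)) (opNorm ↑γ)⁻¹)ᶜ →
          y ∈ (Dopen (mobius k'⁻¹ (some 0)) (opNorm ↑γ)⁻¹)ᶜ →
          chordal (mobius ↑γ x) (mobius ↑γ y) ≤ C₂ * chordal x y := by
  refine ⟨2, by norm_num, ?_⟩
  intro γ hT k k' lam hk hk' hlam hdec x y hx hy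
  set T : ℝ := opNorm ↑γ with hTdef
  set A : Matrix (Fin 2) (Fin 2) ℂ := Matrix.diagonal ![lam, lam⁻¹] with hAdef
  have hlam0 : lam ≠ 0 := by
    intro h0; rw [h0] at hlam; simp at hlam; linarith
  have hdetA : A.det ≠ 0 := by
    rw [hAdef, Matrix.det_diagonal, Fin.prod_univ_two]
    simp only [Matrix.cons_val_zero, Matrix.cons_val_one, Matrix.head_cons]
    rw [mul_inv_cancel₀ hlam0]
    exact one_ne_zero
  have hdetk' : k'.det ≠ 0 := by rw [hk'.1]; exact one_ne_zero
  have hdetk'inv : (k'⁻¹).det ≠ 0 := by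
    rw [Matrix.det_nonsing_inv, hk'.1]
    simp
  have hk'k'inv : k' * k'⁻¹ = 1 := Matrix.mul_nonsing_inv k' (by rw [hk'.1]; exact isUnit_one)
  -- T ≤ |lam|
  have hTlam : T ≤ ‖lam‖ := by
    have h1 : opNorm (↑γ : Matrix (Fin 2) (Fin 2) ℂ) ≤ opNorm (k * A) * opNorm k' := by
      rw [hdec]; exact opNorm_mul_le _ _
    have h2 : opNorm (k * A) ≤ opNorm k * opNorm A := opNorm_mul_le _ _
    have h3 : opNorm A ≤ ‖lam‖ := opNorm_diag_le lam hlam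
    rw [opNorm_su2 hk'] at h1
    rw [opNorm_su2 hk] at h2
    calc T = opNorm (↑γ : Matrix (Fin 2) (Fin 2) ℂ) := hTdef
      _ ≤ opNorm (k * A) * 1 := h1
      _ = opNorm (k * A) := mul_one _
      _ ≤ 1 * opNorm A := h2
      _ = opNorm A := one_mul _
      _ ≤ ‖lam‖ := h3
  -- decomposition of mobius action
  have hdecomp : ∀ w : Option ℂ, mobius ↑γ w = mobius k (mobius A (mobius k' w)) := by
    intro w
    rw [hdec, mobius_comp hdetk', mobius_comp hdetA]
  -- image of south pole
  have hs : mobius k' (mobius k'⁻¹ (some 0)) = some 0 := by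
    rw [← mobius_comp hdetk'inv, hk'k'inv, mobius_one]
  -- translate membership conditions
  have hx' : T⁻¹ ≤ chordal (mobius k' x) (some 0) := by
    have := hx
    simp only [Dopen, mem_compl_iff, mem_setOf_eq, not_lt] at this
    calc T⁻¹ ≤ chordal x (mobius k'⁻¹ (some 0)) := this
      _ = chordal (mobius k' x) (mobius k' (mobius k'⁻¹ (some 0))) :=
          (chordal_mobius_su2 hk' x _).symm
      _ = chordal (mobius k' x) (some 0) := by rw [hs]
  have hy' : T⁻¹ ≤ chordal (mobius k' y) (some 0) := by
    have := hy
    simp only [Dopen, mem_compl_iff, mem_setOf_eq, not_lt] at this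
    calc T⁻¹ ≤ chordal y (mobius k'⁻¹ (some 0)) := this
      _ = chordal (mobius k' y) (mobius k' (mobius k'⁻¹ (some 0))) :=
          (chordal_mobius_su2 hk' y _).symm
      _ = chordal (mobius k' y) (some 0) := by rw [hs]
  calc chordal (mobius ↑γ x) (mobius ↑γ y)
      = chordal (mobius k (mobius A (mobius k' x))) (mobius k (mobius A (mobius k' y))) := by
        rw [hdecomp x, hdecomp y]
    _ = chordal (mobius A (mobius k' x)) (mobius A (mobius k' y)) := chordal_mobius_su2 hk _ _
    _ ≤ 2 * chordal (mobius k' x) (mobius k' y) :=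
        diag_estimate lam T hT hTlam _ _ hx' hy'
    _ = 2 * chordal x y := by rw [chordal_mobius_su2 hk' x y]
end
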